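/- Let n ≥ 4 be an integer. For 2 ≤ k ≤ ⌊n/2⌋ let B_k := Σ_{T ⊆ {1,…,n}, |T| = k} δ_T ∈ V_n. Then the classes B_2, B_3, …, B_{⌊n/2⌋} form a basis of the subspace of V_n consisting of elements invariant under the natural action of the symmetric group S_n (which permutes the indices {1,…,n} and hence the symbols δ_T). In particular there are no non-trivial S_n-symmetric linear relations among the boundary classes δ_T. (This is the paper's assertion that the Picard group of \bar M_{0,n}/S_n is freely generated by the boundary divisors B_k, and that 'there are no symmetric relations'.) -/

import Mathlib

open Finset

noncomputable section

/-- The free `ℚ`-vector space on the symbols `δ_T`, `T ⊆ {1,…,n}`. -/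
abbrev FreeV (n : ℕ) := Finset (Fin n) →₀ ℚ

/-- The defining relations of the vector space `V_n`:
(i) `δ_T = δ_{Tᶜ}`;  (ii) `δ_T = 0` for `|T| ≤ 1`;
(iii) for distinct `i, j, k, l`,
`Σ_{i,j ∈ T, k,l ∉ T} δ_T = Σ_{i,k ∈ T, j,l ∉ T} δ_T`. -/
def relSet (n : ℕ) : Set (FreeV n) :=
  {x | (∃ T : Finset (Fin n), x = Finsupp.single T 1 - Finsupp.single Tᶜ 1) ∨
       (∃ T : Finset (Fin n), T.card ≤ 1 ∧ x = Finsupp.single T 1) ∨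
       (∃ i j k l : Fin n,
         (i ≠ j ∧ i ≠ k ∧ i ≠ l ∧ j ≠ k ∧ j ≠ l ∧ k ≠ l) ∧
         x = (∑ T ∈ univ.filter
                (fun T : Finset (Fin n) => i ∈ T ∧ j ∈ T ∧ k ∉ T ∧ l ∉ T),
                Finsupp.single T (1 : ℚ)) -
             ∑ T ∈ univ.filter
                (fun T : Finset (Fin n) => i ∈ T ∧ k ∈ T ∧ j ∉ T ∧ l ∉ T),
                Finsupp.single T (1 : ℚ))}

/-- The submodule of relations. -/
def relSub (n : ℕ) : Submodule ℚ (FreeV n) := Submodule.span ℚ (relSet n)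

/-- The `ℚ`-vector space `V_n` spanned by the symbols `δ_T`, `T ⊆ {1,…,n}`,
modulo the relations (i)–(iii); this is the `ℚ`-Picard group of `\bar M_{0,n}`. -/
abbrev V (n : ℕ) := FreeV n ⧸ relSub n

/-- The boundary class `δ_T ∈ V_n`. -/
def delta {n : ℕ} (T : Finset (Fin n)) : V n :=
  Submodule.Quotient.mk (Finsupp.single T 1)

/-- An element of `V_n` is an *effective boundary class* if it is a linear
combination of the classes `δ_T` with nonnegative rational coefficients. -/
def IsEffectiveBoundary {n : ℕ} (x : V n) : Prop :=
  ∃ c : Finset (Fin n) → ℚ, (∀ T, 0 ≤ c T) ∧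
    x = ∑ T : Finset (Fin n), c T • delta T

/-- The permutation action on the free vector space: `δ_T ↦ δ_{σ(T)}`. -/
def permFree (n : ℕ) (σ : Equiv.Perm (Fin n)) : FreeV n →ₗ[ℚ] FreeV n :=
  Finsupp.lmapDomain ℚ ℚ (fun T => T.map σ.toEmbedding)

lemma finset_map_compl {n : ℕ} (σ : Equiv.Perm (Fin n)) (T : Finset (Fin n)) :
    Tᶜ.map σ.toEmbedding = (T.map σ.toEmbedding)ᶜ := by
  ext x
  simp [Finset.mem_map_equiv]

lemma permFree_single {n : ℕ} (σ : Equiv.Perm (Fin n)) (T : Finset (Fin n)) (q : ℚ) :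
    permFree n σ (Finsupp.single T q) = Finsupp.single (T.map σ.toEmbedding) q := by
  simp [permFree, Finsupp.mapDomain_single]

/-- The defining relations of `V_n` are permuted among themselves by `S_n`. -/
lemma relSet_stable {n : ℕ} (σ : Equiv.Perm (Fin n)) :
    ∀ x ∈ relSet n, permFree n σ x ∈ relSet n := by
  rintro x (⟨T, rfl⟩ | ⟨T, hT, rfl⟩ | ⟨i, j, k, l, hd, rfl⟩)
  · left
    refine ⟨T.map σ.toEmbedding, ?_⟩
    rw [map_sub, permFree_single, permFree_single, finset_map_compl]
  · right; left
    refine ⟨T.map σ.toEmbedding, by simpa using hT, ?_⟩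
    rw [permFree_single]
  · right; right
    obtain ⟨h1, h2, h3, h4, h5, h6⟩ := hd
    refine ⟨σ i, σ j, σ k, σ l,
      ⟨fun h => h1 (σ.injective h), fun h => h2 (σ.injective h),
       fun h => h3 (σ.injective h), fun h => h4 (σ.injective h),
       fun h => h5 (σ.injective h), fun h => h6 (σ.injective h)⟩, ?_⟩
    rw [map_sub, map_sum, map_sum]
    simp_rw [permFree_single]
    congr 1
    · refine Finset.sum_equiv σ.finsetCongr ?_ ?_
      · intro T
        simp [Finset.mem_map_equiv]
      · intro T _
        simp
    · refine Finset.sum_equiv σ.finsetCongr ?_ ?_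
      · intro T
        simp [Finset.mem_map_equiv]
      · intro T _
        simp

/-- The action of a permutation `σ ∈ S_n` on `V_n`, sending `δ_T` to `δ_{σ(T)}`;
it is well defined since the defining relations are permuted among themselves. -/
def permV (n : ℕ) (σ : Equiv.Perm (Fin n)) : V n →ₗ[ℚ] V n :=
  Submodule.mapQ (relSub n) (relSub n) (permFree n σ) (by
    rw [relSub, Submodule.span_le]
    intro x hx
    simp only [SetLike.mem_coe, Submodule.mem_comap]
    exact Submodule.subset_span (relSet_stable σ x hx))

/-- The subspace of `V_n` of elements invariant under the natural `S_n`-action. -/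
def invariants (n : ℕ) : Submodule ℚ (V n) :=
  ⨅ σ : Equiv.Perm (Fin n), LinearMap.eqLocus (permV n σ) LinearMap.id

/-- The symmetrized boundary class `B_k = Σ_{|T| = k} δ_T ∈ V_n`. -/
def Bclass (n k : ℕ) : V n :=
  ∑ T ∈ univ.filter (fun T : Finset (Fin n) => T.card = k), delta T


section Aux

variable {n : ℕ}

lemma delta_compl (T : Finset (Fin n)) : delta Tᶜ = delta T := by
  symm
  rw [delta, delta, Submodule.Quotient.eq]
  exact Submodule.subset_span (Or.inl ⟨T, rfl⟩)

lemma delta_small {T : Finset (Fin n)} (h : T.card ≤ 1) : delta T = 0 := by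
  rw [delta, Submodule.Quotient.mk_eq_zero]
  exact Submodule.subset_span (Or.inr (Or.inl ⟨T, h, rfl⟩))

lemma permV_delta (σ : Equiv.Perm (Fin n)) (T : Finset (Fin n)) :
    permV n σ (delta T) = delta (T.map σ.toEmbedding) := by
  rw [delta, delta, permV, Submodule.mapQ_apply, permFree_single]

lemma permV_B (σ : Equiv.Perm (Fin n)) (k : ℕ) :
    permV n σ (Bclass n k) = Bclass n k := by
  unfold Bclass
  rw [map_sum]
  simp_rw [permV_delta]
  refine Finset.sum_equiv σ.finsetCongr ?_ ?_
  · intro T; simp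
  · intro T _; rw [Equiv.finsetCongr_apply]

lemma B_mem_invariants (k : ℕ) : Bclass n k ∈ invariants n := by
  rw [invariants, Submodule.mem_iInf]
  intro σ
  exact permV_B σ k

/-- weight function depending only on cardinality -/
def wt (n m : ℕ) : Finset (Fin n) → ℚ :=
  fun T => if T.card = m ∨ T.card = n - m then 1 else 0

def Ffree (n m : ℕ) : FreeV n →ₗ[ℚ] ℚ := Finsupp.linearCombination ℚ (wt n m)

lemma Ffree_single (m : ℕ) (T : Finset (Fin n)) (q : ℚ) :
    Ffree n m (Finsupp.single T q) = q * wt n m T := by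
  simp [Ffree, Finsupp.linearCombination_single, smul_eq_mul]

lemma Ffree_rel {m : ℕ} (hn : 4 ≤ n) (hm : 2 ≤ m) (hm2 : m ≤ n / 2) :
    ∀ x ∈ relSet n, Ffree n m x = 0 := by
  have hmn : m ≤ n := le_trans hm2 (Nat.div_le_self n 2)
  rintro x (⟨T, rfl⟩ | ⟨T, hT, rfl⟩ | ⟨i, j, k, l, ⟨h1, h2, h3, h4, h5, h6⟩, rfl⟩)
  · have hTn : T.card ≤ n := by
      have := Finset.card_le_univ T
      simpa using this
    have hc : Tᶜ.card = n - T.card := by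
      rw [Finset.card_compl]; simp
    rw [map_sub, Ffree_single, Ffree_single, one_mul, one_mul, sub_eq_zero]
    unfold wt
    rw [hc]
    by_cases h : T.card = m ∨ T.card = n - m
    · rw [if_pos h, if_pos (by omega)]
    · rw [if_neg h, if_neg (by omega)]
  · rw [Ffree_single, one_mul]
    unfold wt
    rw [if_neg (by omega)]
  · rw [map_sub, map_sum, map_sum, sub_eq_zero]
    refine Finset.sum_equiv (Equiv.swap j k).finsetCongr ?_ ?_
    · intro T
      simp only [Finset.mem_filter, Finset.mem_univ, true_and,
        Equiv.finsetCongr_apply, Finset.mem_map_equiv, Equiv.symm_swap]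
      rw [Equiv.swap_apply_of_ne_of_ne h1 h2, Equiv.swap_apply_right,
        Equiv.swap_apply_left,
        Equiv.swap_apply_of_ne_of_ne (Ne.symm h5) (Ne.symm h6)]
    · intro T _
      rw [Equiv.finsetCongr_apply, Ffree_single, Ffree_single]
      unfold wt
      rw [Finset.card_map]

def FV (n m : ℕ) (h : ∀ x ∈ relSet n, Ffree n m x = 0) : V n →ₗ[ℚ] ℚ :=
  Submodule.liftQ (relSub n) (Ffree n m) (by
    rw [relSub, Submodule.span_le]
    exact fun x hx => h x hx)

lemma FV_delta (m : ℕ) (h : ∀ x ∈ relSet n, Ffree n m x = 0) (T : Finset (Fin n)) :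
    FV n m h (delta T) = wt n m T := by
  rw [delta, FV, Submodule.liftQ_apply, Ffree_single, one_mul]

lemma FV_B (m : ℕ) (h : ∀ x ∈ relSet n, Ffree n m x = 0) (k : ℕ) :
    FV n m h (Bclass n k) =
      ((univ.filter (fun T : Finset (Fin n) => T.card = k)).card : ℚ) *
        (if k = m ∨ k = n - m then 1 else 0) := by
  rw [Bclass, map_sum]
  rw [Finset.sum_congr rfl (fun T hT => ?_), Finset.sum_const, nsmul_eq_mul]
  rw [FV_delta]
  unfold wt
  rw [(Finset.mem_filter.1 hT).2]

lemma exists_perm_map (S T : Finset (Fin n)) (h : T.card = S.card) :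
    ∃ τ : Equiv.Perm (Fin n), T.map τ.toEmbedding = S := by
  have hcard : Fintype.card {x : Fin n // x ∈ T} = Fintype.card {x : Fin n // x ∈ S} := by
    simp only [Fintype.card_coe, h]
  let e : {x : Fin n // x ∈ T} ≃ {x : Fin n // x ∈ S} := Fintype.equivOfCardEq hcard
  refine ⟨e.extendSubtype, ?_⟩
  have hsub : T.map e.extendSubtype.toEmbedding ⊆ S := by
    intro y hy
    obtain ⟨x, hx, rfl⟩ := Finset.mem_map.1 hy
    exact e.extendSubtype_mem x hx
  refine Finset.eq_of_subset_of_card_le hsub ?_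
  rw [Finset.card_map, h]

lemma map_mul_perm (σ τ : Equiv.Perm (Fin n)) (T : Finset (Fin n)) :
    T.map (σ * τ).toEmbedding = (T.map τ.toEmbedding).map σ.toEmbedding := by
  ext x
  simp only [Finset.mem_map_equiv]
  rfl

lemma sum_perm_delta (T : Finset (Fin n)) :
    (Fintype.card (Equiv.Perm (Fin n)) : ℚ) • Bclass n T.card
      = ((univ.filter (fun S : Finset (Fin n) => S.card = T.card)).card : ℚ) •
          ∑ σ : Equiv.Perm (Fin n), delta (T.map σ.toEmbedding) := by
  have key : ∀ S ∈ univ.filter (fun S : Finset (Fin n) => S.card = T.card),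
      ∑ σ : Equiv.Perm (Fin n), delta (S.map σ.toEmbedding)
        = ∑ σ : Equiv.Perm (Fin n), delta (T.map σ.toEmbedding) := by
    intro S hS
    obtain ⟨τ, hτ⟩ := exists_perm_map S T ((Finset.mem_filter.1 hS).2).symm
    refine Fintype.sum_equiv (Equiv.mulRight τ) _ _ (fun σ => ?_)
    simp only [Equiv.coe_mulRight]
    rw [map_mul_perm, hτ]
  calc (Fintype.card (Equiv.Perm (Fin n)) : ℚ) • Bclass n T.card
      = ∑ _σ : Equiv.Perm (Fin n), Bclass n T.card := by
        rw [Finset.sum_const, Finset.card_univ, ← Nat.cast_smul_eq_nsmul ℚ]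
    _ = ∑ σ : Equiv.Perm (Fin n), permV n σ (Bclass n T.card) := by
        simp_rw [permV_B]
    _ = ∑ σ : Equiv.Perm (Fin n),
          ∑ S ∈ univ.filter (fun S : Finset (Fin n) => S.card = T.card),
            delta (S.map σ.toEmbedding) := by
        refine Finset.sum_congr rfl (fun σ _ => ?_)
        rw [Bclass, map_sum]
        simp_rw [permV_delta]
    _ = ∑ S ∈ univ.filter (fun S : Finset (Fin n) => S.card = T.card),
          ∑ σ : Equiv.Perm (Fin n), delta (S.map σ.toEmbedding) := Finset.sum_comm
    _ = ∑ _S ∈ univ.filter (fun S : Finset (Fin n) => S.card = T.card),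
          ∑ σ : Equiv.Perm (Fin n), delta (T.map σ.toEmbedding) :=
        Finset.sum_congr rfl key
    _ = _ := by rw [Finset.sum_const, ← Nat.cast_smul_eq_nsmul ℚ]

lemma Bclass_compl (j : ℕ) (hj : j ≤ n) : Bclass n j = Bclass n (n - j) := by
  rw [Bclass, Bclass]
  refine Finset.sum_nbij' (fun T => Tᶜ) (fun T => Tᶜ) ?_ ?_ ?_ ?_ ?_
  · intro T hT
    simp only [Finset.mem_filter, Finset.mem_univ, true_and] at hT ⊢
    rw [Finset.card_compl, hT]
    simp
  · intro T hT
    simp only [Finset.mem_filter, Finset.mem_univ, true_and] at hT ⊢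
    rw [Finset.card_compl, hT]
    simp
    omega
  · intro T _; exact compl_compl T
  · intro T _; exact compl_compl T
  · intro T _; exact (delta_compl T).symm

lemma B_mem_span (hn : 4 ≤ n) (j : ℕ) :
    Bclass n j ∈ Submodule.span ℚ
      (Set.range fun k : ↥(Finset.Icc 2 (n / 2)) => Bclass n (k : ℕ)) := by
  have hzero : ∀ i : ℕ, i ≤ 1 ∨ n < i → Bclass n i = 0 := by
    intro i hi
    refine Finset.sum_eq_zero (fun T hT => ?_)
    simp only [Finset.mem_filter, Finset.mem_univ, true_and] at hT
    rcases hi with hi | hi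
    · exact delta_small (by omega)
    · exfalso
      have : T.card ≤ n := by simpa using Finset.card_le_univ T
      omega
  rcases le_or_gt j 1 with h | h
  · rw [hzero j (Or.inl h)]; exact zero_mem _
  rcases le_or_gt j (n / 2) with h2 | h2
  · exact Submodule.subset_span ⟨⟨j, Finset.mem_Icc.2 ⟨h, h2⟩⟩, rfl⟩
  rcases le_or_gt j n with h3 | h3
  · rw [Bclass_compl j h3]
    rcases le_or_gt (n - j) 1 with h4 | h4
    · rw [hzero (n - j) (Or.inl h4)]; exact zero_mem _
    · exact Submodule.subset_span
        ⟨⟨n - j, Finset.mem_Icc.2 ⟨h4, by omega⟩⟩, rfl⟩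
  · rw [hzero j (Or.inr h3)]; exact zero_mem _

lemma mk_eq_sum (y : FreeV n) :
    (Submodule.Quotient.mk y : V n) = ∑ T ∈ y.support, y T • delta T := by
  conv_lhs => rw [← Finsupp.sum_single y]
  rw [Finsupp.sum, ← Submodule.mkQ_apply, map_sum]
  refine Finset.sum_congr rfl (fun T _ => ?_)
  rw [delta, ← Submodule.mkQ_apply, ← map_smul, Finsupp.smul_single, smul_eq_mul,
    mul_one]

end Aux

/-- **The classes `B_2, …, B_{⌊n/2⌋}` freely generate the `S_n`-invariant
subspace of `V_n`** (the Picard group of `\bar M_{0,n}/S_n` is freely generated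
by the boundary divisors `B_k`): each `B_k` (`2 ≤ k ≤ ⌊n/2⌋`) is invariant,
they are linearly independent — so in particular there are no non-trivial
`S_n`-symmetric linear relations among the boundary classes `δ_T` — and they
span the invariant subspace. -/
theorem Bclasses_basis_of_invariants (n : ℕ) (hn : 4 ≤ n) :
    (∀ k ∈ Finset.Icc 2 (n / 2), Bclass n k ∈ invariants n) ∧
    LinearIndependent ℚ (fun k : ↥(Finset.Icc 2 (n / 2)) => Bclass n (k : ℕ)) ∧
    Submodule.span ℚ
        (Set.range fun k : ↥(Finset.Icc 2 (n / 2)) => Bclass n (k : ℕ)) =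
      invariants n := by
  refine ⟨fun k _ => B_mem_invariants k, ?_, ?_⟩
  · rw [Fintype.linearIndependent_iff]
    intro g hg m
    have hm := Finset.mem_Icc.1 m.2
    have hmn : (m : ℕ) ≤ n := le_trans hm.2 (Nat.div_le_self n 2)
    have hrel := Ffree_rel (n := n) (m := (m : ℕ)) hn hm.1 hm.2
    apply_fun (FV n (m : ℕ) hrel) at hg
    rw [map_sum, map_zero] at hg
    simp_rw [map_smul] at hg
    have hmain : ∑ i : ↥(Finset.Icc 2 (n / 2)),
        g i • (FV n (m : ℕ) hrel (Bclass n (i : ℕ)))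
          = g m • FV n (m : ℕ) hrel (Bclass n (m : ℕ)) := by
      refine Fintype.sum_eq_single m (fun i hi => ?_)
      have hi2 := Finset.mem_Icc.1 i.2
      have hne : (i : ℕ) ≠ (m : ℕ) := fun hc => hi (Subtype.ext hc)
      have hcond : ¬((i : ℕ) = (m : ℕ) ∨ (i : ℕ) = n - (m : ℕ)) := by omega
      rw [FV_B, if_neg hcond, mul_zero, smul_zero]
    rw [hmain, FV_B, if_pos (Or.inl rfl), mul_one, smul_eq_mul] at hg
    have hN : ((univ.filter (fun T : Finset (Fin n) => T.card = (m : ℕ))).card : ℚ) ≠ 0 := by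
      have hne : (univ.filter (fun T : Finset (Fin n) => T.card = (m : ℕ))).Nonempty := by
        obtain ⟨t, -, ht⟩ := Finset.exists_subset_card_eq
          (s := (univ : Finset (Fin n))) (n := (m : ℕ)) (by simpa using hmn)
        exact ⟨t, by simp [ht]⟩
      exact_mod_cast (Finset.card_pos.2 hne).ne'
    exact (mul_eq_zero.1 hg).resolve_right hN
  · apply le_antisymm
    · rw [Submodule.span_le]
      rintro _ ⟨k, rfl⟩
      exact B_mem_invariants _
    · intro x hx
      rw [invariants, Submodule.mem_iInf] at hx
      obtain ⟨y, rfl⟩ := Submodule.Quotient.mk_surjective (relSub n) x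
      have hfix : ∀ σ : Equiv.Perm (Fin n),
          permV n σ (Submodule.Quotient.mk y : V n) = Submodule.Quotient.mk y :=
        fun σ => hx σ
      set sp := Submodule.span ℚ
        (Set.range fun k : ↥(Finset.Icc 2 (n / 2)) => Bclass n (k : ℕ)) with hsp
      have hA : ∀ T : Finset (Fin n),
          (∑ σ : Equiv.Perm (Fin n), delta (T.map σ.toEmbedding)) ∈ sp := by
        intro T
        have hN : ((univ.filter (fun S : Finset (Fin n) => S.card = T.card)).card : ℚ) ≠ 0 := by
          exact_mod_cast (Finset.card_pos.2 ⟨T, by simp⟩).ne'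
        have heq := sum_perm_delta (n := n) T
        have hAe : (∑ σ : Equiv.Perm (Fin n), delta (T.map σ.toEmbedding))
            = (((univ.filter (fun S : Finset (Fin n) => S.card = T.card)).card : ℚ))⁻¹ •
                ((Fintype.card (Equiv.Perm (Fin n)) : ℚ) • Bclass n T.card) := by
          rw [heq, inv_smul_smul₀ hN]
        rw [hAe]
        exact Submodule.smul_mem _ _ (Submodule.smul_mem _ _ (B_mem_span hn _))
      have hsum : (Fintype.card (Equiv.Perm (Fin n)) : ℚ) •
          (Submodule.Quotient.mk y : V n) ∈ sp := by
        have h1 : (Fintype.card (Equiv.Perm (Fin n)) : ℚ) •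
            (Submodule.Quotient.mk y : V n)
              = ∑ σ : Equiv.Perm (Fin n), permV n σ (Submodule.Quotient.mk y) := by
          simp_rw [hfix]
          rw [Finset.sum_const, Finset.card_univ, ← Nat.cast_smul_eq_nsmul ℚ]
        have h2 : ∀ σ : Equiv.Perm (Fin n),
            permV n σ (Submodule.Quotient.mk y : V n)
              = ∑ T ∈ y.support, y T • delta (T.map σ.toEmbedding) := by
          intro σ
          rw [mk_eq_sum, map_sum]
          simp_rw [map_smul, permV_delta]
        rw [h1]
        simp_rw [h2]
        rw [Finset.sum_comm]
        refine Submodule.sum_mem _ (fun T _ => ?_)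
        rw [← Finset.smul_sum]
        exact Submodule.smul_mem _ _ (hA T)
      have hcard : (Fintype.card (Equiv.Perm (Fin n)) : ℚ) ≠ 0 := by
        exact_mod_cast Fintype.card_ne_zero
      have hfin := Submodule.smul_mem sp
        ((Fintype.card (Equiv.Perm (Fin n)) : ℚ))⁻¹ hsum
      rwa [inv_smul_smul₀ hcard] at hfin

end
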